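/- Fix β ∈ (0,1) and h : [0,1] → [0,1]. Suppose b : [0,1] → [0,∞) satisfies E[h(P^a)·1{b(P^a)·P ≤ s}] ≤ (1-β)s for all s ∈ [0,1], for all valid p-values P and all [0,1]-valued P^a INDEPENDENT of P. Then b(x) ≥ h(x)/(1-β) for every x with h(x) > 0. Moreover b(x) = h(x)/(1-β) satisfies the constraint, so it is the pointwise smallest valid choice. -/

import Mathlib

open MeasureTheory Set ProbabilityTheory

lemma aux_indepFun_const {Ω : Type} [MeasurableSpace Ω] (μ : Measure Ω)
    [IsProbabilityMeasure μ] (f : Ω → ℝ) (c : ℝ) : IndepFun f (fun _ => c) μ := by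
  rw [indepFun_iff_measure_inter_preimage_eq_mul]
  intro s t _ _
  by_cases hc : c ∈ t
  · have ht : (fun _ : Ω => c) ⁻¹' t = univ := by ext ω; simp [hc]
    simp [ht]
  · have ht : (fun _ : Ω => c) ⁻¹' t = ∅ := by ext ω; simp [hc]
    simp [ht]

lemma aux_part2
    (β : ℝ) (hβ : β ∈ Ioo (0:ℝ) 1)
    (h : ℝ → ℝ) (hhm : Measurable h) (hh01 : ∀ x ∈ Icc (0:ℝ) 1, h x ∈ Icc (0:ℝ) 1) :
    (∀ (Ω : Type) [MeasurableSpace Ω] (μ : Measure Ω), IsProbabilityMeasure μ →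
      ∀ (P Pa : Ω → ℝ), Measurable P → Measurable Pa →
        (∀ s ∈ Icc (0:ℝ) 1, μ {ω | P ω ≤ s} ≤ ENNReal.ofReal s) →
        (∀ ω, Pa ω ∈ Icc (0:ℝ) 1) → IndepFun P Pa μ →
        ∀ s ∈ Icc (0:ℝ) 1,
          ∫ ω, h (Pa ω) * (if (h (Pa ω) / (1 - β)) * P ω ≤ s then (1:ℝ) else 0) ∂μ
            ≤ (1 - β) * s) := by
  intro Ω _ μ hμ P Pa hP hPa hsup hPa01 hindep s hs
  have hβ1 : (0:ℝ) < 1 - β := by linarith [hβ.2]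
  set c : ℝ := 1 - β with hc
  have hmap : μ.map (fun ω => (P ω, Pa ω)) = (μ.map P).prod (μ.map Pa) :=
    (indepFun_iff_map_prod_eq_prod_map_map hP.aemeasurable hPa.aemeasurable).1 hindep
  set ν := μ.map P with hν
  set νa := μ.map Pa with hνa
  have hνp : IsProbabilityMeasure ν := Measure.isProbabilityMeasure_map hP.aemeasurable
  have hνap : IsProbabilityMeasure νa := Measure.isProbabilityMeasure_map hPa.aemeasurable
  set F : ℝ × ℝ → ℝ := fun q => h q.2 * (if (h q.2 / c) * q.1 ≤ s then 1 else 0) with hF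
  have hmulm : Measurable (fun q : ℝ × ℝ => h q.2 / c * q.1) :=
    ((hhm.comp measurable_snd).div_const c).mul measurable_fst
  have hFm : Measurable F := by
    apply (hhm.comp measurable_snd).mul
    exact Measurable.ite (measurableSet_le hmulm measurable_const)
      measurable_const measurable_const
  have hcomp : Measurable (fun ω => F (P ω, Pa ω)) := hFm.comp (hP.prodMk hPa)
  have hnn : ∀ ω, 0 ≤ F (P ω, Pa ω) := by
    intro ω
    have := (hh01 _ (hPa01 ω)).1
    dsimp only [F]
    positivity
  have hcs : 0 ≤ c * s := mul_nonneg hβ1.le hs.1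
  show (∫ ω, F (P ω, Pa ω) ∂μ) ≤ c * s
  have hint : ∫ ω, F (P ω, Pa ω) ∂μ
      = (∫⁻ ω, ENNReal.ofReal (F (P ω, Pa ω)) ∂μ).toReal := by
    rw [integral_eq_lintegral_of_nonneg_ae (Filter.Eventually.of_forall hnn)
      hcomp.aestronglyMeasurable]
  rw [hint]
  have key : ∫⁻ ω, ENNReal.ofReal (F (P ω, Pa ω)) ∂μ ≤ ENNReal.ofReal (c * s) := by
    have h1 : ∫⁻ ω, ENNReal.ofReal (F (P ω, Pa ω)) ∂μ
        = ∫⁻ q, ENNReal.ofReal (F q) ∂(ν.prod νa) := by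
      rw [← hmap, lintegral_map hFm.ennreal_ofReal (hP.prodMk hPa)]
    rw [h1, lintegral_prod_symm' _ hFm.ennreal_ofReal]
    have haet : ∀ᵐ t ∂νa, t ∈ Icc (0:ℝ) 1 := by
      rw [hνa]
      exact (ae_map_iff hPa.aemeasurable measurableSet_Icc).2
        (Filter.Eventually.of_forall hPa01)
    have hbound : ∀ᵐ t ∂νa, ∫⁻ p, ENNReal.ofReal (F (p, t)) ∂ν ≤ ENNReal.ofReal (c * s) := by
      filter_upwards [haet] with t ht
      have hht := hh01 t ht
      by_cases hzero : h t = 0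
      · have : ∀ p : ℝ, ENNReal.ofReal (F (p, t)) = 0 := by
          intro p; simp [F, hzero]
        simp [this]
      have hpos : 0 < h t := lt_of_le_of_ne hht.1 (Ne.symm hzero)
      set u : ℝ := s * c / h t with hu
      have hu0 : 0 ≤ u := div_nonneg (mul_nonneg hs.1 hβ1.le) hpos.le
      have hcond : ∀ p : ℝ, (h t / c * p ≤ s) ↔ p ∈ Iic u := by
        intro p
        rw [mem_Iic, hu, mul_comm, ← le_div_iff₀ (div_pos hpos hβ1), div_div_eq_mul_div]
      have hFeq : ∀ p : ℝ, ENNReal.ofReal (F (p, t))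
          = ENNReal.ofReal (h t) * (Iic u).indicator 1 p := by
        intro p
        by_cases hp : p ∈ Iic u
        · have h2 : h t / c * p ≤ s := (hcond p).2 hp
          simp [F, h2, hp]
        · have h2 : ¬ (h t / c * p ≤ s) := fun hcontra => hp ((hcond p).1 hcontra)
          simp [F, h2, hp]
      simp_rw [hFeq]
      rw [lintegral_const_mul _ (measurable_one.indicator measurableSet_Iic),
        lintegral_indicator_one measurableSet_Iic]
      by_cases hu1 : u ≤ 1
      · have hνu : ν (Iic u) ≤ ENNReal.ofReal u := by
          rw [hν, Measure.map_apply hP measurableSet_Iic]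
          exact hsup u ⟨hu0, hu1⟩
        calc ENNReal.ofReal (h t) * ν (Iic u)
            ≤ ENNReal.ofReal (h t) * ENNReal.ofReal u := mul_le_mul_right hνu _
          _ = ENNReal.ofReal (h t * u) := (ENNReal.ofReal_mul hht.1).symm
          _ = ENNReal.ofReal (c * s) := by
              congr 1
              rw [hu, mul_div_assoc', mul_div_cancel_left₀ _ hpos.ne', mul_comm]
      · have h1u : ν (Iic u) ≤ 1 := prob_le_one
        have hle : h t ≤ c * s := by
          have : 1 < u := lt_of_not_ge hu1
          have h2 : 1 * h t < s * c := (lt_div_iff₀ hpos).1 this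
          nlinarith
        calc ENNReal.ofReal (h t) * ν (Iic u)
            ≤ ENNReal.ofReal (h t) * 1 := mul_le_mul_right h1u _
          _ = ENNReal.ofReal (h t) := mul_one _
          _ ≤ ENNReal.ofReal (c * s) := ENNReal.ofReal_le_ofReal hle
    calc ∫⁻ t, ∫⁻ p, ENNReal.ofReal (F (p, t)) ∂ν ∂νa
        ≤ ∫⁻ _, ENNReal.ofReal (c * s) ∂νa := lintegral_mono_ae hbound
      _ = ENNReal.ofReal (c * s) := by simp
  calc (∫⁻ ω, ENNReal.ofReal (F (P ω, Pa ω)) ∂μ).toReal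
      ≤ (ENNReal.ofReal (c * s)).toReal := ENNReal.toReal_mono (by simp) key
    _ = c * s := ENNReal.toReal_ofReal hcs

/-- Optimality of the query-branch scaling under independence: any valid `b` satisfies
`b(x) ≥ h(x)/(1-β)` wherever `h(x) > 0`, and `b(x) = h(x)/(1-β)` satisfies the constraint. -/
theorem active_pvalue_b_optimal_indep
    (β : ℝ) (hβ : β ∈ Ioo (0:ℝ) 1)
    (h : ℝ → ℝ) (hhm : Measurable h) (hh01 : ∀ x ∈ Icc (0:ℝ) 1, h x ∈ Icc (0:ℝ) 1)
    (b : ℝ → ℝ) (hbnn : ∀ x, 0 ≤ b x)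
    (H : ∀ (Ω : Type) [MeasurableSpace Ω] (μ : Measure Ω), IsProbabilityMeasure μ →
      ∀ (P Pa : Ω → ℝ), Measurable P → Measurable Pa →
        (∀ s ∈ Icc (0:ℝ) 1, μ {ω | P ω ≤ s} ≤ ENNReal.ofReal s) →
        (∀ ω, Pa ω ∈ Icc (0:ℝ) 1) → IndepFun P Pa μ →
        ∀ s ∈ Icc (0:ℝ) 1,
          ∫ ω, h (Pa ω) * (if b (Pa ω) * P ω ≤ s then (1:ℝ) else 0) ∂μ ≤ (1 - β) * s) :
    (∀ x ∈ Icc (0:ℝ) 1, 0 < h x → h x / (1 - β) ≤ b x) ∧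
    (∀ (Ω : Type) [MeasurableSpace Ω] (μ : Measure Ω), IsProbabilityMeasure μ →
      ∀ (P Pa : Ω → ℝ), Measurable P → Measurable Pa →
        (∀ s ∈ Icc (0:ℝ) 1, μ {ω | P ω ≤ s} ≤ ENNReal.ofReal s) →
        (∀ ω, Pa ω ∈ Icc (0:ℝ) 1) → IndepFun P Pa μ →
        ∀ s ∈ Icc (0:ℝ) 1,
          ∫ ω, h (Pa ω) * (if (h (Pa ω) / (1 - β)) * P ω ≤ s then (1:ℝ) else 0) ∂μ
            ≤ (1 - β) * s) := by
  have hβ1 : (0:ℝ) < 1 - β := by linarith [hβ.2]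
  refine ⟨?_, aux_part2 β hβ h hhm hh01⟩
  intro x hx hhx
  -- instantiate with uniform P on [0,1] and constant Pa = x
  set μ1 : Measure ℝ := volume.restrict (Icc (0:ℝ) 1) with hμ1
  have hprob : IsProbabilityMeasure μ1 := by
    constructor
    rw [hμ1, Measure.restrict_apply_univ, Real.volume_Icc]
    simp
  have hsup : ∀ s ∈ Icc (0:ℝ) 1, μ1 {ω | id ω ≤ s} ≤ ENNReal.ofReal s := by
    intro s hs
    have hsub : Iic s ∩ Icc 0 1 ⊆ Icc 0 s := by
      rintro p ⟨hp1, hp2, _⟩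
      exact ⟨hp2, hp1⟩
    have hid : {ω : ℝ | id ω ≤ s} = Iic s := rfl
    calc μ1 {ω | id ω ≤ s} = volume (Iic s ∩ Icc 0 1) := by
          rw [hid, hμ1, Measure.restrict_apply measurableSet_Iic]
      _ ≤ volume (Icc 0 s) := measure_mono hsub
      _ = ENNReal.ofReal s := by rw [Real.volume_Icc, sub_zero]
  have hPa01 : ∀ ω : ℝ, (fun _ : ℝ => x) ω ∈ Icc (0:ℝ) 1 := fun _ => hx
  have hindep : IndepFun (id : ℝ → ℝ) (fun _ => x) μ1 := aux_indepFun_const μ1 id x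
  have key := H ℝ μ1 hprob id (fun _ => x) measurable_id measurable_const hsup hPa01 hindep
  by_cases hb0 : b x = 0
  · exfalso
    have k0 := key 0 ⟨le_refl 0, zero_le_one⟩
    have : ∫ ω, h x * (if b x * id ω ≤ (0:ℝ) then (1:ℝ) else 0) ∂μ1 = h x := by
      have heq : (fun ω : ℝ => h x * (if b x * id ω ≤ (0:ℝ) then (1:ℝ) else 0))
          = fun _ => h x := by
        ext ω; simp [hb0]
      rw [heq, integral_const]
      simp
    rw [this] at k0
    simp at k0
    linarith
  have hbpos : 0 < b x := lt_of_le_of_ne (hbnn x) (Ne.symm hb0)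
  rw [div_le_iff₀ hβ1]
  by_cases hb1 : b x ≤ 1
  · have k1 := key (b x) ⟨hbpos.le, hb1⟩
    have : ∫ ω, h x * (if b x * id ω ≤ b x then (1:ℝ) else 0) ∂μ1 = h x := by
      have heq : ∀ ω ∈ Icc (0:ℝ) 1,
          h x * (if b x * id ω ≤ b x then (1:ℝ) else 0) = h x := by
        intro ω hω
        have : b x * ω ≤ b x := by nlinarith [hω.2]
        simp [this]
      rw [hμ1, setIntegral_congr_fun measurableSet_Icc heq, setIntegral_const]
      have : volume (Icc (0:ℝ) 1) = 1 := by rw [Real.volume_Icc]; simp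
      rw [measureReal_def, this]
      simp
    rw [this] at k1
    nlinarith
  · push_neg at hb1
    have k1 := key 1 ⟨zero_le_one, le_refl 1⟩
    have hcalc : ∫ ω, h x * (if b x * id ω ≤ (1:ℝ) then (1:ℝ) else 0) ∂μ1
        = h x * (b x)⁻¹ := by
      have heq : (fun ω : ℝ => h x * (if b x * id ω ≤ (1:ℝ) then (1:ℝ) else 0))
          = (Iic (b x)⁻¹).indicator (fun _ => h x) := by
        ext ω
        have hiff : (b x * ω ≤ 1) ↔ ω ∈ Iic (b x)⁻¹ := by
          rw [mem_Iic, ← one_div, le_div_iff₀ hbpos, mul_comm]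
        by_cases hp : ω ∈ Iic (b x)⁻¹
        · have h2 := hiff.2 hp
          simp [Set.indicator_of_mem hp, h2]
        · have h2 : ¬ (b x * ω ≤ 1) := fun hcontra => hp (hiff.1 hcontra)
          simp [Set.indicator_of_notMem hp, h2]
      rw [heq, integral_indicator measurableSet_Iic, hμ1,
        Measure.restrict_restrict measurableSet_Iic, setIntegral_const]
      have hset : Iic (b x)⁻¹ ∩ Icc (0:ℝ) 1 = Icc 0 (b x)⁻¹ := by
        ext p
        simp only [mem_inter_iff, mem_Iic, mem_Icc]
        constructor
        · rintro ⟨h1, h2, h3⟩; exact ⟨h2, h1⟩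
        · rintro ⟨h1, h2⟩
          refine ⟨h2, h1, ?_⟩
          have h3 : (b x)⁻¹ ≤ 1 := by
            rw [← one_div, div_le_one hbpos]; linarith
          linarith
      rw [hset, measureReal_def, Real.volume_Icc, sub_zero, ENNReal.toReal_ofReal (by positivity)]
      simp [mul_comm]
    rw [hcalc] at k1
    have hfin : h x ≤ (1 - β) * b x := by
      rw [mul_one, ← div_eq_mul_inv] at k1
      exact (div_le_iff₀ hbpos).1 k1
    linarith
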